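/- arXiv:1204.1743 — 4 statements merged into one kernel-verified Lean document; each statement's English description precedes it below -/
import Mathlib

section
/- Let p > 3 be a prime and let a, b ∈ ℚ_p be nonzero with |a|_p = |b|_p = 1, |−4a³ − 27b²|_p = 1, and u_{p−2} ≡ 0 (mod p), where a_0, b_0 are the first digits of a and b and (u_n) is the integer sequence defined by u_1 = 0, u_2 = −a_0, u_3 = b_0, and u_{n+3} = b_0·u_n − a_0·u_{n+1}. Then the equation x³ + ax = b has exactly 3 solutions x in ℤ_p^*, i.e. the set {x ∈ ℚ_p : |x|_p = 1 and x³ + ax = b} has exactly 3 elements. -/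
/-- `x0` is the first digit of the nonzero `p`-adic number `x`: the unique integer in
`{1, …, p-1}` congruent modulo `p` to the unit part `x* = x·|x|_p = x·p^{-v_p(x)}`. -/
def isFirstDigit (p : ℕ) [Fact p.Prime] (x : ℚ_[p]) (x0 : ℤ) : Prop :=
  1 ≤ x0 ∧ x0 ≤ (p : ℤ) - 1 ∧ ‖x * (p : ℚ_[p]) ^ (-x.valuation) - (x0 : ℚ_[p])‖ < 1

/-- The sequence `u_1 = 0`, `u_2 = -a0`, `u_3 = b0`, `u_{n+3} = b0·u_n - a0·u_{n+1}`. -/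
def useq (a0 b0 : ℤ) : ℕ → ℤ
  | 0 => 0
  | 1 => 0
  | 2 => -a0
  | 3 => b0
  | n + 4 => b0 * useq a0 b0 (n + 1) - a0 * useq a0 b0 (n + 2)

open Polynomial


section ModP

lemma cubic_natDegree {R : Type*} [CommRing R] [Nontrivial R] (α β : R) :
    (X^3 + C α * X - C β : R[X]).natDegree = 3 := by
  compute_degree!

lemma cubic_degree {R : Type*} [CommRing R] [Nontrivial R] (α β : R) :
    (X^3 + C α * X - C β : R[X]).degree = 3 := by
  compute_degree!

lemma cubic_monic {R : Type*} [CommRing R] [Nontrivial R] (α β : R) :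
    (X^3 + C α * X - C β : R[X]).Monic := by
  unfold Monic
  unfold leadingCoeff
  rw [cubic_natDegree]
  simp [coeff_X_pow, coeff_C]

variable {p : ℕ} [Fact p.Prime]

-- f divides f.comp L, given f ∣ X^p - L
lemma dvd_comp {p : ℕ} [Fact p.Prime] (α β : ZMod p) (L : (ZMod p)[X])
    (hdvd : (X^3 + C α * X - C β : (ZMod p)[X]) ∣ X^p - L) :
    (X^3 + C α * X - C β : (ZMod p)[X]) ∣ (X^3 + C α * X - C β : (ZMod p)[X]).comp L := by
  set f : (ZMod p)[X] := X^3 + C α * X - C β with hf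
  have hcompXp : f.comp (X ^ p) = f ^ p := by
    have h1 := Polynomial.map_frobenius_expand (p := p) f
    rwa [ZMod.frobenius_zmod, Polynomial.map_id, Polynomial.expand_eq_comp_X_pow] at h1
  have h2 : (X ^ p - L : (ZMod p)[X]) ∣ f.comp (X^p) - f.comp L := by
    have h3 := Polynomial.sub_dvd_eval_sub (X ^ p : (ZMod p)[X]) L (f.map C)
    rwa [Polynomial.eval_map, Polynomial.eval_map] at h3
  have h4 : f ∣ f ^ p - (f.comp (X^p) - f.comp L) := by
    apply dvd_sub (dvd_pow_self f (Fact.out : p.Prime).ne_zero) (dvd_trans hdvd h2)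
  rw [hcompXp] at h4
  simpa using h4

lemma eq_C_mul_of_dvd {p : ℕ} [Fact p.Prime] {f g : (ZMod p)[X]} (hm : f.Monic)
    (hdeg : f.natDegree = 3) (hdvd : f ∣ g) (hg : g.natDegree ≤ 3) :
    g = C (g.coeff 3) * f := by
  obtain ⟨q, rfl⟩ := hdvd
  rcases eq_or_ne q 0 with rfl | hq
  · simp
  · have hnd : (f * q).natDegree = f.natDegree + q.natDegree := hm.natDegree_mul' (by
      simpa [hm.leadingCoeff] using leadingCoeff_ne_zero.mpr hq)
    have hq0 : q.natDegree = 0 := by omega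
    obtain ⟨c, rfl⟩ := natDegree_eq_zero.mp hq0
    have : (f * C c).coeff 3 = c := by
      rw [coeff_mul_C, ← hdeg, hm.coeff_natDegree, one_mul]
    rw [this, mul_comm]
-- test pieces
example (p : ℕ) [Fact p.Prime] (hp : 3 < p) : (3 : ZMod p) ≠ 0 := by
  have : ((3:ℕ) : ZMod p) ≠ 0 := by
    rw [Ne, ZMod.natCast_eq_zero_iff]
    intro h
    have := Nat.le_of_dvd (by norm_num) h
    omega
  simpa using this

example (p : ℕ) [Fact p.Prime] (c0 : ZMod p) :
    (X - C c0 : (ZMod p)[X])^p = X^p - C c0 := by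
  rw [sub_pow_char, ← C_pow, ZMod.pow_card]

example (p : ℕ) [Fact p.Prime] (c0 α β : ZMod p)
    (h : (X^3 + C α * X - C β : (ZMod p)[X]) ∣ X^p - C c0) (hα : α ≠ 0) (h3 : (3:ZMod p) ≠ 0) : False := by
  set f : (ZMod p)[X] := X^3 + C α * X - C β with hf
  have hq : Prime (X - C c0 : (ZMod p)[X]) := prime_X_sub_C c0
  rw [← show (X - C c0 : (ZMod p)[X])^p = X^p - C c0 by
    rw [sub_pow_char, ← C_pow, ZMod.pow_card]] at h
  obtain ⟨i, hip, hass⟩ := (dvd_prime_pow hq p).mp h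
  have hfm : f.Monic := cubic_monic α β
  have heq : f = (X - C c0)^i := eq_of_monic_of_associated hfm ((monic_X_sub_C c0).pow i) hass
  have hi3 : i = 3 := by
    have hnd := cubic_natDegree α β
    rw [hf] at heq
    rw [heq] at hnd
    simpa [natDegree_pow] using hnd
    
  subst hi3
  have hexp : (X - C c0 : (ZMod p)[X])^3
      = X^3 - C (3*c0) * X^2 + C (3*c0^2) * X - C (c0^3) := by
    simp only [map_mul, map_pow, map_ofNat]
    ring
  rw [hexp, hf] at heq
  have h2 := congrArg (fun g => coeff g 2) heq
  have h1 := congrArg (fun g => coeff g 1) heq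
  simp only [coeff_add, coeff_sub, coeff_C_mul, coeff_X_pow, coeff_X, coeff_C] at h1 h2
  norm_num at h1 h2
  rcases h2 with h2 | h2
  · exact h3 h2
  · subst h2; simp at h1; exact hα h1

lemma cubic_dvd_Xp_sub_X {p : ℕ} [Fact p.Prime] (hp : 3 < p) (α β c1 c0 : ZMod p)
    (hα : α ≠ 0) (hβ : β ≠ 0)
    (hdvd : (X^3 + C α * X - C β : (ZMod p)[X]) ∣ X^p - (C c1 * X + C c0)) :
    (X^3 + C α * X - C β : (ZMod p)[X]) ∣ X^p - X := by
  have h3 : (3 : ZMod p) ≠ 0 := by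
    have h3' : ((3:ℕ) : ZMod p) ≠ 0 := by
      rw [Ne, ZMod.natCast_eq_zero_iff]
      intro h
      have := Nat.le_of_dvd (by norm_num) h
      omega
    simpa using h3'
  rcases eq_or_ne c1 0 with rfl | hc1
  · -- impossible case
    exfalso
    rw [show (C (0:ZMod p) * X + C c0) = C c0 by simp] at hdvd
    rw [← show (X - C c0 : (ZMod p)[X])^p = X^p - C c0 by
      rw [sub_pow_char, ← C_pow, ZMod.pow_card]] at hdvd
    have hq : Prime (X - C c0 : (ZMod p)[X]) := prime_X_sub_C c0
    obtain ⟨i, hip, hass⟩ := (dvd_prime_pow hq p).mp hdvd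
    have hfm := cubic_monic α β
    have heq : (X^3 + C α * X - C β : (ZMod p)[X]) = (X - C c0)^i :=
      eq_of_monic_of_associated hfm ((monic_X_sub_C c0).pow i) hass
    have hi3 : i = 3 := by
      have hnd := cubic_natDegree α β
      rw [heq] at hnd
      simpa [natDegree_pow] using hnd
    subst hi3
    have hexp : (X - C c0 : (ZMod p)[X])^3
        = X^3 - C (3*c0) * X^2 + C (3*c0^2) * X - C (c0^3) := by
      simp only [map_mul, map_pow, map_ofNat]
      ring
    rw [hexp] at heq
    have h2 := congrArg (fun g => coeff g 2) heq
    have h1 := congrArg (fun g => coeff g 1) heq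
    simp only [coeff_add, coeff_sub, coeff_C_mul, coeff_X_pow, coeff_X, coeff_C] at h1 h2
    norm_num at h1 h2
    rcases h2 with h2 | h2
    · exact h3 h2
    · subst h2; simp at h1; exact hα h1
  · have hcomp := dvd_comp α β (C c1 * X + C c0) hdvd
    have hdeg : ((X^3 + C α * X - C β : (ZMod p)[X]).comp (C c1 * X + C c0)).natDegree ≤ 3 := by
      refine le_trans (natDegree_comp_le) ?_
      rw [cubic_natDegree]
      have := natDegree_linear_le (a := c1) (b := c0)
      omega
    have hgeq := eq_C_mul_of_dvd (cubic_monic α β) (cubic_natDegree α β) hcomp hdeg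
    have hLexp : (X^3 + C α * X - C β : (ZMod p)[X]).comp (C c1 * X + C c0) =
        C (c1^3) * X^3 + C (3*c1^2*c0) * X^2 + C (3*c1*c0^2 + α*c1) * X
          + C (c0^3 + α*c0 - β) := by
      simp only [add_comp, sub_comp, mul_comp, pow_comp, X_comp, C_comp, map_mul, map_add,
        map_pow, map_sub, map_ofNat]
      ring
    rw [hLexp] at hgeq
    have hc3 : (C (c1^3) * X^3 + C (3*c1^2*c0) * X^2 + C (3*c1*c0^2 + α*c1) * X
          + C (c0^3 + α*c0 - β) : (ZMod p)[X]).coeff 3 = c1^3 := by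
      simp only [coeff_add, coeff_C_mul, coeff_X_pow, coeff_X, coeff_C]
      norm_num
    rw [hc3] at hgeq
    have h2 := congrArg (fun g => coeff g 2) hgeq
    have h1 := congrArg (fun g => coeff g 1) hgeq
    have h0 := congrArg (fun g => coeff g 0) hgeq
    simp only [coeff_add, coeff_sub, coeff_C_mul, coeff_X_pow, coeff_X, coeff_C] at h0 h1 h2
    norm_num at h0 h1 h2
    have hc0 : c0 = 0 := by
      rcases h2 with (h | h) | h
      · exact absurd h h3
      · exact absurd h hc1
      · exact h
    subst hc0
    have e1 : α * c1 = α * c1^3 := by linear_combination h1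
    have ec1 : c1 = c1^3 := mul_left_cancel₀ hα e1
    have e0 : β * c1^3 = β * 1 := by linear_combination h0
    have ec3 : c1^3 = 1 := mul_left_cancel₀ hβ e0
    have hone : c1 = 1 := by rw [ec1, ec3]
    subst hone
    simpa using hdvd

lemma cubic_three_roots {p : ℕ} [Fact p.Prime] (hp : 3 < p) (α β : ZMod p)
    (hdvd : (X^3 + C α * X - C β : (ZMod p)[X]) ∣ X^p - X) :
    ∃ r1 r2 r3 : ZMod p, r1 ≠ r2 ∧ r1 ≠ r3 ∧ r2 ≠ r3 ∧
      ∀ r, (r = r1 ∨ r = r2 ∨ r = r3) →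
        (X^3 + C α * X - C β : (ZMod p)[X]).eval r = 0 ∧
        ((X^3 + C α * X - C β : (ZMod p)[X]).derivative.eval r ≠ 0) := by
  have hXp : Separable (X^p - X : (ZMod p)[X]) := galois_poly_separable p p dvd_rfl
  have hsep : Separable (X^3 + C α * X - C β : (ZMod p)[X]) := hXp.of_dvd hdvd
  have hXpne : (X^p - X : (ZMod p)[X]) ≠ 0 :=
    FiniteField.X_pow_card_sub_X_ne_zero _ (by omega)
  have hXsplits : Splits (X^p - X : (ZMod p)[X]) := by
    have := FiniteField.splits_X_pow_card_sub_X (K := ZMod p) (p := p)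
    rwa [ZMod.card, Algebra.algebraMap_self, Polynomial.map_id] at this
  have hsplits : Splits (X^3 + C α * X - C β : (ZMod p)[X]) :=
    hXsplits.of_dvd hXpne hdvd
  have hcard : Multiset.card (X^3 + C α * X - C β : (ZMod p)[X]).roots = 3 := by
    rw [splits_iff_card_roots.mp hsplits, cubic_natDegree]
  have hnodup : (X^3 + C α * X - C β : (ZMod p)[X]).roots.Nodup := nodup_roots hsep
  obtain ⟨r1, r2, r3, hroots⟩ := Multiset.card_eq_three.mp hcard
  rw [hroots] at hnodup
  simp only [Multiset.insert_eq_cons, Multiset.nodup_cons, Multiset.mem_cons,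
    Multiset.mem_singleton, Multiset.nodup_singleton] at hnodup
  refine ⟨r1, r2, r3, ?_, ?_, ?_, ?_⟩
  · tauto
  · tauto
  · tauto
  · intro r hr
    have hmem : r ∈ (X^3 + C α * X - C β : (ZMod p)[X]).roots := by
      rw [hroots]
      rcases hr with rfl | rfl | rfl <;> simp
    have hne : (X^3 + C α * X - C β : (ZMod p)[X]) ≠ 0 := (cubic_monic α β).ne_zero
    have heval : (X^3 + C α * X - C β : (ZMod p)[X]).eval r = 0 :=
      (mem_roots hne).mp hmem
    refine ⟨heval, ?_⟩
    obtain ⟨u, v, huv⟩ := hsep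
    intro hder
    have := congrArg (fun g => eval r g) huv
    simp only [eval_add, eval_mul, eval_one, heval, hder, mul_zero, add_zero, zero_add] at this
    simp at this

section Seq
variable {p : ℕ} [Fact p.Prime]

/-- recurrence step for remainders -/
lemma coeff_pow_modByMonic_step (α β : ZMod p) (m : ℕ) :
    ((X^(m+3) : (ZMod p)[X]) %ₘ (X^3 + C α * X - C β)).coeff 2
      = β * (((X^m : (ZMod p)[X]) %ₘ (X^3 + C α * X - C β)).coeff 2)
        - α * (((X^(m+1) : (ZMod p)[X]) %ₘ (X^3 + C α * X - C β)).coeff 2) := by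
  have hsplit : (X^(m+3) : (ZMod p)[X])
      = (β • (X^m : (ZMod p)[X]) - α • (X^(m+1) : (ZMod p)[X]))
        + (X^3 + C α * X - C β) * X^m := by
    simp only [smul_eq_C_mul]
    ring
  rw [hsplit, add_modByMonic, sub_modByMonic, smul_modByMonic, smul_modByMonic,
    (modByMonic_eq_zero_iff_dvd (cubic_monic α β)).mpr (dvd_mul_right _ _), add_zero,
    coeff_sub, coeff_smul, coeff_smul]
  simp [smul_eq_mul]

lemma useq_cast_eq_coeff (a0 b0 : ℤ) (n : ℕ) :
    ((useq a0 b0 (n+1) : ℤ) : ZMod p)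
      = (((X^(n+3) : (ZMod p)[X])) %ₘ (X^3 + C (a0 : ZMod p) * X - C (b0 : ZMod p))).coeff 2 := by
  set α : ZMod p := (a0 : ZMod p) with hαdef
  set β : ZMod p := (b0 : ZMod p) with hβdef
  induction n using Nat.strong_induction_on with
  | _ n ih =>
    match n, ih with
    | 0, _ =>
      have h3 : ((X^3 : (ZMod p)[X])) %ₘ (X^3 + C α * X - C β) = C β - C α * X := by
        refine (div_modByMonic_unique 1 (C β - C α * X) (cubic_monic α β) ⟨by ring, ?_⟩).2
        rw [cubic_degree]
        refine lt_of_le_of_lt (degree_sub_le _ _) ?_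
        simp only [max_lt_iff]
        exact ⟨lt_of_le_of_lt degree_C_le (by norm_num),
          lt_of_le_of_lt (degree_C_mul_X_le α) (by norm_num)⟩
      rw [show (0:ℕ)+3 = 3 by rfl, h3, show useq a0 b0 (0+1) = 0 from rfl]
      simp only [Int.cast_zero, coeff_sub, coeff_C, coeff_C_mul, coeff_X]
      norm_num
    | 1, _ =>
      have h4 : ((X^4 : (ZMod p)[X])) %ₘ (X^3 + C α * X - C β) = C β * X - C α * X^2 := by
        refine (div_modByMonic_unique X (C β * X - C α * X^2) (cubic_monic α β) ⟨by ring, ?_⟩).2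
        rw [cubic_degree]
        refine lt_of_le_of_lt (degree_sub_le _ _) ?_
        simp only [max_lt_iff]
        refine ⟨lt_of_le_of_lt (degree_C_mul_X_le β) (by norm_num), ?_⟩
        refine lt_of_le_of_lt (degree_mul_le _ _) ?_
        exact lt_of_le_of_lt (add_le_add degree_C_le (degree_X_pow_le 2)) (by norm_num)
      rw [show (1:ℕ)+3 = 4 by rfl, h4, show useq a0 b0 (1+1) = -a0 from rfl]
      rw [coeff_sub, coeff_C_mul, coeff_C_mul, coeff_X, coeff_X_pow]
      push_cast
      norm_num
      exact hαdef.symm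
    | 2, _ =>
      have h5 : ((X^5 : (ZMod p)[X])) %ₘ (X^3 + C α * X - C β)
          = C β * X^2 + C (α^2) * X - C (α*β) := by
        refine (div_modByMonic_unique (X^2 - C α) (C β * X^2 + C (α^2) * X - C (α*β))
          (cubic_monic α β) ⟨by simp only [map_pow, map_mul]; ring, ?_⟩).2
        rw [cubic_degree]
        refine lt_of_le_of_lt (degree_sub_le _ _) ?_
        simp only [max_lt_iff]
        refine ⟨?_, lt_of_le_of_lt degree_C_le (by norm_num)⟩
        refine lt_of_le_of_lt (degree_add_le _ _) ?_
        simp only [max_lt_iff]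
        constructor
        · refine lt_of_le_of_lt (degree_mul_le _ _) ?_
          exact lt_of_le_of_lt (add_le_add degree_C_le (degree_X_pow_le 2)) (by norm_num)
        · exact lt_of_le_of_lt (degree_C_mul_X_le _) (by norm_num)
      rw [show (2:ℕ)+3 = 5 by rfl, h5, show useq a0 b0 (2+1) = b0 from rfl]
      rw [coeff_sub, coeff_add, coeff_C_mul, coeff_C_mul, coeff_C, coeff_X, coeff_X_pow]
      norm_num
      exact hβdef.symm
    | (m+3), ih =>
      have key := coeff_pow_modByMonic_step α β (m+3)
      have e1 : m+3+1 = m+1+3 := by omega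
      rw [e1] at key
      have ih1 := ih m (by omega)
      have ih2 := ih (m+1) (by omega)
      rw [show useq a0 b0 (m+3+1) = b0 * useq a0 b0 (m+1) - a0 * useq a0 b0 (m+2) from rfl]
      push_cast
      rw [ih1, key, ← hαdef, ← hβdef]
      rw [show m+1+1 = m+2 from rfl] at ih2
      rw [ih2]

end Seq

lemma modp_master {p : ℕ} [Fact p.Prime] (hp : 3 < p) (a0 b0 : ℤ)
    (hα : (a0 : ZMod p) ≠ 0) (hβ : (b0 : ZMod p) ≠ 0)
    (hu : ((useq a0 b0 (p - 2) : ℤ) : ZMod p) = 0) :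
    ∃ r1 r2 r3 : ZMod p, r1 ≠ r2 ∧ r1 ≠ r3 ∧ r2 ≠ r3 ∧
      ∀ r, (r = r1 ∨ r = r2 ∨ r = r3) →
        (X^3 + C (a0 : ZMod p) * X - C (b0 : ZMod p) : (ZMod p)[X]).eval r = 0 ∧
        ((X^3 + C (a0 : ZMod p) * X - C (b0 : ZMod p) : (ZMod p)[X]).derivative.eval r ≠ 0) := by
  set α : ZMod p := (a0 : ZMod p)
  set β : ZMod p := (b0 : ZMod p)
  set f : (ZMod p)[X] := X^3 + C α * X - C β with hfdef
  set r : (ZMod p)[X] := (X^p : (ZMod p)[X]) %ₘ f with hrdef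
  have hc2 : r.coeff 2 = 0 := by
    have h := useq_cast_eq_coeff (p := p) a0 b0 (p-3)
    rw [show p-3+1 = p-2 by omega, show p-3+3 = p by omega] at h
    rw [hrdef, hfdef, ← h, hu]
  have hfne1 : f ≠ 1 := by
    intro h
    have := cubic_degree α β
    rw [← hfdef, h] at this
    simp at this
  have hnd2 : r.natDegree < 3 := by
    have := natDegree_modByMonic_lt (X^p : (ZMod p)[X]) (cubic_monic α β) hfne1
    rwa [← hfdef, cubic_natDegree α β] at this
  have hnd1 : r.natDegree ≤ 1 := by
    rw [natDegree_le_iff_coeff_eq_zero]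
    intro m hm
    rcases eq_or_lt_of_le (show 2 ≤ m by omega) with rfl | h
    · exact hc2
    · exact coeff_eq_zero_of_natDegree_lt (by omega)
  have hr : r = C (r.coeff 1) * X + C (r.coeff 0) := eq_X_add_C_of_natDegree_le_one hnd1
  have hdvd : f ∣ (X^p : (ZMod p)[X]) - (C (r.coeff 1) * X + C (r.coeff 0)) := by
    refine ⟨(X^p : (ZMod p)[X]) /ₘ f, ?_⟩
    have hadd := modByMonic_add_div (X^p : (ZMod p)[X]) (X^3 + C α * X - C β)
    rw [← hfdef] at hadd
    rw [← hr]
    rw [hrdef]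
    linear_combination -hadd
  exact cubic_three_roots hp α β (cubic_dvd_Xp_sub_X hp α β _ _ hα hβ hdvd)

section Padic
variable {p : ℕ} [Fact p.Prime]

lemma toZMod_eq_zero_iff (x : ℤ_[p]) : PadicInt.toZMod x = 0 ↔ ‖x‖ < 1 := by
  rw [PadicInt.norm_lt_one_iff_dvd, ← Ideal.mem_span_singleton,
    ← PadicInt.maximalIdeal_eq_span_p, ← PadicInt.ker_toZMod, RingHom.mem_ker]

lemma norm_eq_one_of_toZMod_ne (x : ℤ_[p]) (h : PadicInt.toZMod x ≠ 0) : ‖x‖ = 1 := by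
  refine le_antisymm x.2 ?_
  by_contra hlt
  push_neg at hlt
  exact h ((toZMod_eq_zero_iff x).mpr hlt)

lemma lift_root (F : ℤ_[p][X]) (r : ZMod p)
    (h0 : (F.map PadicInt.toZMod).eval r = 0)
    (h1 : ((F.map PadicInt.toZMod).derivative).eval r ≠ 0) :
    ∃ z : ℤ_[p], F.eval z = 0 ∧ PadicInt.toZMod z = r := by
  set R : ℤ_[p] := ((ZMod.val r : ℕ) : ℤ_[p]) with hRdef
  have hR : PadicInt.toZMod R = r := by
    rw [hRdef, map_natCast]
    simp [ZMod.natCast_val, ZMod.cast_id]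
  have hev0 : PadicInt.toZMod (F.eval R) = 0 := by
    have : (F.map PadicInt.toZMod).eval (PadicInt.toZMod R) = PadicInt.toZMod (F.eval R) := by
      rw [eval_map, eval₂_at_apply]
    rw [← this, hR, h0]
  have hevlt : ‖F.eval R‖ < 1 := (toZMod_eq_zero_iff _).mp hev0
  have hd : PadicInt.toZMod (F.derivative.eval R) ≠ 0 := by
    have : (F.map PadicInt.toZMod).derivative.eval (PadicInt.toZMod R)
        = PadicInt.toZMod (F.derivative.eval R) := by
      rw [derivative_map, eval_map, eval₂_at_apply]
    rw [← this, hR]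
    exact h1
  have hd1 : ‖F.derivative.eval R‖ = 1 := norm_eq_one_of_toZMod_ne _ hd
  have hnorm : ‖F.eval R‖ < ‖F.derivative.eval R‖ ^ 2 := by
    rw [hd1]; simpa using hevlt
  obtain ⟨z, hz0, hzR, -, -⟩ := hensels_lemma hnorm
  refine ⟨z, hz0, ?_⟩
  rw [coe_aeval_eq_eval, hd1] at hzR
  have : PadicInt.toZMod (z - R) = 0 := (toZMod_eq_zero_iff _).mpr hzR
  rw [map_sub, hR, sub_eq_zero] at this
  exact this

end Padic


theorem cubic_three_unit_solutions_of_unit_discriminant (p : ℕ) [Fact p.Prime]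
    (hp : 3 < p) (a b : ℚ_[p]) (ha : a ≠ 0) (hb : b ≠ 0)
    (ha1 : ‖a‖ = 1) (hb1 : ‖b‖ = 1)
    (hD : ‖-4 * a ^ 3 - 27 * b ^ 2‖ = 1)
    (a0 b0 : ℤ) (ha0 : isFirstDigit p a a0) (hb0 : isFirstDigit p b b0)
    (hu : Int.ModEq (p : ℤ) (useq a0 b0 (p - 2)) 0) :
    {x : ℚ_[p] | ‖x‖ = 1 ∧ x ^ 3 + a * x = b}.ncard = 3 := by
  classical
  have hval : ∀ x : ℚ_[p], x ≠ 0 → ‖x‖ = 1 → x.valuation = 0 := by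
    intro x hx hx1
    have h := Padic.norm_eq_zpow_neg_valuation hx
    rw [hx1] at h
    have hp1 : (1:ℝ) < (p:ℝ) := by exact_mod_cast (Fact.out : p.Prime).one_lt
    have := zpow_right_injective₀ (by linarith) (by linarith)
      (h.symm.trans (zpow_zero (p:ℝ)).symm : ((p:ℝ)^(-x.valuation) = (p:ℝ)^(0:ℤ)))
    omega
  obtain ⟨ha01, ha02, ha03⟩ := ha0
  obtain ⟨hb01, hb02, hb03⟩ := hb0
  rw [hval a ha ha1, neg_zero, zpow_zero, mul_one] at ha03
  rw [hval b hb hb1, neg_zero, zpow_zero, mul_one] at hb03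
  set A : ℤ_[p] := ⟨a, le_of_eq ha1⟩ with hAdef
  set B : ℤ_[p] := ⟨b, le_of_eq hb1⟩ with hBdef
  have hAa : (A : ℚ_[p]) = a := rfl
  have hBb : (B : ℚ_[p]) = b := rfl
  have htoz : ∀ (x : ℤ_[p]) (n : ℤ), ‖x - (n:ℤ_[p])‖ < 1 → PadicInt.toZMod x = (n : ZMod p) := by
    intro x n h
    have h2 : PadicInt.toZMod (x - (n:ℤ_[p])) = 0 := (toZMod_eq_zero_iff _).mpr h
    rw [map_sub, map_intCast, sub_eq_zero] at h2
    exact h2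
  have hAz : PadicInt.toZMod A = ((a0:ℤ) : ZMod p) := by
    refine htoz A a0 ?_
    rw [PadicInt.norm_def]
    push_cast
    exact ha03
  have hBz : PadicInt.toZMod B = ((b0:ℤ) : ZMod p) := by
    refine htoz B b0 ?_
    rw [PadicInt.norm_def]
    push_cast
    exact hb03
  have hα : ((a0:ℤ) : ZMod p) ≠ 0 := by
    rw [Ne, ZMod.intCast_zmod_eq_zero_iff_dvd]
    intro hdvd
    have := Int.le_of_dvd (by omega) hdvd
    omega
  have hβ : ((b0:ℤ) : ZMod p) ≠ 0 := by
    rw [Ne, ZMod.intCast_zmod_eq_zero_iff_dvd]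
    intro hdvd
    have := Int.le_of_dvd (by omega) hdvd
    omega
  have hu' : ((useq a0 b0 (p-2) : ℤ) : ZMod p) = 0 := by
    have := (ZMod.intCast_eq_intCast_iff _ _ _).mpr hu
    simpa using this
  obtain ⟨r1, r2, r3, h12, h13, h23, hroot⟩ := modp_master hp a0 b0 hα hβ hu'
  set F : ℤ_[p][X] := X^3 + C A * X - C B with hFdef
  have hmap : F.map PadicInt.toZMod
      = X^3 + C ((a0:ℤ):ZMod p) * X - C ((b0:ℤ):ZMod p) := by
    rw [hFdef]
    simp [Polynomial.map_add, Polynomial.map_sub, Polynomial.map_pow, Polynomial.map_mul,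
      map_X, map_C, hAz, hBz]
  have lift : ∀ r : ZMod p, (r = r1 ∨ r = r2 ∨ r = r3) →
      ∃ z : ℤ_[p], F.eval z = 0 ∧ PadicInt.toZMod z = r := by
    intro r hr
    obtain ⟨h0, h1⟩ := hroot r hr
    exact lift_root F r (by rw [hmap]; exact h0) (by rw [hmap]; exact h1)
  obtain ⟨z1, hz1, hz1r⟩ := lift r1 (Or.inl rfl)
  obtain ⟨z2, hz2, hz2r⟩ := lift r2 (Or.inr (Or.inl rfl))
  obtain ⟨z3, hz3, hz3r⟩ := lift r3 (Or.inr (Or.inr rfl))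
  have hrne : ∀ r, (r = r1 ∨ r = r2 ∨ r = r3) → r ≠ 0 := by
    intro r hr h0
    obtain ⟨he, -⟩ := hroot r hr
    rw [h0] at he
    simp only [eval_sub, eval_add, eval_pow, eval_mul, eval_X, eval_C] at he
    apply hβ
    linear_combination -he
  have hzn : ∀ (z : ℤ_[p]) (r : ZMod p), PadicInt.toZMod z = r →
      (r = r1 ∨ r = r2 ∨ r = r3) → ‖(z : ℚ_[p])‖ = 1 := by
    intro z r hzr hr
    rw [← PadicInt.norm_def]
    apply norm_eq_one_of_toZMod_ne
    rw [hzr]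
    exact hrne r hr
  have hsol : ∀ z : ℤ_[p], F.eval z = 0 → ((z:ℚ_[p])^3 + a * (z:ℚ_[p]) = b) := by
    intro z hz
    have h2 : ((F.eval z : ℤ_[p]) : ℚ_[p]) = 0 := by rw [hz]; exact PadicInt.coe_zero
    rw [hFdef] at h2
    simp only [eval_sub, eval_add, eval_pow, eval_mul, eval_X, eval_C] at h2
    push_cast at h2
    linear_combination h2
  set S := {x : ℚ_[p] | ‖x‖ = 1 ∧ x ^ 3 + a * x = b} with hSdef
  set g : (ℚ_[p])[X] := X^3 + C a * X - C b with hgdef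
  have hgne : g ≠ 0 := (cubic_monic a b).ne_zero
  have hsubT : S ⊆ ↑g.roots.toFinset := by
    intro x hx
    obtain ⟨-, hx2⟩ := hx
    rw [Finset.mem_coe, Multiset.mem_toFinset, mem_roots hgne]
    show eval x g = 0
    rw [hgdef]
    simp only [eval_sub, eval_add, eval_pow, eval_mul, eval_X, eval_C]
    linear_combination hx2
  have hz1S : (z1 : ℚ_[p]) ∈ S := ⟨hzn z1 r1 hz1r (Or.inl rfl), hsol z1 hz1⟩
  have hz2S : (z2 : ℚ_[p]) ∈ S := ⟨hzn z2 r2 hz2r (Or.inr (Or.inl rfl)), hsol z2 hz2⟩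
  have hz3S : (z3 : ℚ_[p]) ∈ S := ⟨hzn z3 r3 hz3r (Or.inr (Or.inr rfl)), hsol z3 hz3⟩
  have hne12 : (z1 : ℚ_[p]) ≠ (z2 : ℚ_[p]) := by
    intro h
    apply h12
    rw [← hz1r, ← hz2r, (Subtype.coe_injective h : _ = _)]
  have hne13 : (z1 : ℚ_[p]) ≠ (z3 : ℚ_[p]) := by
    intro h
    apply h13
    rw [← hz1r, ← hz3r, (Subtype.coe_injective h : _ = _)]
  have hne23 : (z2 : ℚ_[p]) ≠ (z3 : ℚ_[p]) := by
    intro h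
    apply h23
    rw [← hz2r, ← hz3r, (Subtype.coe_injective h : _ = _)]
  have hTfin : (↑g.roots.toFinset : Set ℚ_[p]).Finite := g.roots.toFinset.finite_toSet
  have hSfin : S.Finite := hTfin.subset hsubT
  have hTcard : (↑g.roots.toFinset : Set ℚ_[p]).ncard ≤ 3 := by
    rw [Set.ncard_coe_finset]
    refine le_trans (Multiset.toFinset_card_le _) ?_
    refine le_trans (Polynomial.card_roots' g) ?_
    rw [hgdef, cubic_natDegree]
  have hsub3 : ({(z1:ℚ_[p]), (z2:ℚ_[p]), (z3:ℚ_[p])} : Set ℚ_[p]) ⊆ S := by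
    intro x hx
    rcases hx with rfl | rfl | rfl
    · exact hz1S
    · exact hz2S
    · exact hz3S
  have h3card : ({(z1:ℚ_[p]), (z2:ℚ_[p]), (z3:ℚ_[p])} : Set ℚ_[p]).ncard = 3 :=
    Set.ncard_eq_three.mpr ⟨_, _, _, hne12, hne13, hne23, rfl⟩
  refine le_antisymm ?_ ?_
  · exact le_trans (Set.ncard_le_ncard hsubT hTfin) hTcard
  · rw [← h3card]
    exact Set.ncard_le_ncard hsub3 hSfin
end ModP
end

section
/- Let p > 3 be a prime and let a, b ∈ ℚ_p be nonzero with |a|_p = |b|_p > 1. Then the equation x³ + ax = b has exactly one solution x in ℤ_p^*, i.e. the set {x ∈ ℚ_p : |x|_p = 1 and x³ + ax = b} has exactly 1 element. -/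
theorem cubic_one_unit_solution_of_eq_gt_one (p : ℕ) [Fact p.Prime] (hp : 3 < p)
    (a b : ℚ_[p]) (ha : a ≠ 0) (hb : b ≠ 0)
    (hab : ‖a‖ = ‖b‖) (ha1 : 1 < ‖a‖) :
    {x : ℚ_[p] | ‖x‖ = 1 ∧ x ^ 3 + a * x = b}.ncard = 1 := by
  have ha0 : ‖a‖ ≠ 0 := norm_ne_zero_iff.mpr ha
  set ε : ℚ_[p] := a⁻¹ with hεdef
  set u : ℚ_[p] := b / a with hudef
  have hεn : ‖ε‖ < 1 := by
    rw [hεdef, norm_inv]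
    exact inv_lt_one_of_one_lt₀ ha1
  have hun : ‖u‖ = 1 := by
    rw [hudef, norm_div, ← hab, div_self ha0]
  -- equivalence between the equation and the fixed point equation
  have hiff : ∀ x : ℚ_[p], x ^ 3 + a * x = b ↔ x = u - ε * x ^ 3 := by
    intro x
    constructor
    · intro h
      field_simp [hεdef, hudef]
      linear_combination a⁻¹ * h - x * mul_inv_cancel₀ ha
    · intro h
      field_simp [hεdef, hudef] at h
      linear_combination a * h + (b - x ^ 3) * mul_inv_cancel₀ ha
  -- uniqueness of fixed points in the unit ball
  have huniq : ∀ x y : ℚ_[p], ‖x‖ ≤ 1 → ‖y‖ ≤ 1 →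
      x = u - ε * x ^ 3 → y = u - ε * y ^ 3 → x = y := by
    intro x y hx hy h1 h2
    by_contra hne
    have hd : x - y = ε * ((y - x) * (y ^ 2 + y * x + x ^ 2)) := by
      calc x - y = (u - ε * x ^ 3) - (u - ε * y ^ 3) := by rw [← h1, ← h2]
        _ = ε * ((y - x) * (y ^ 2 + y * x + x ^ 2)) := by ring
    have hfac : ‖y ^ 2 + y * x + x ^ 2‖ ≤ 1 := by
      refine le_trans (Padic.nonarchimedean _ _) (max_le ?_ ?_)
      · refine le_trans (Padic.nonarchimedean _ _) (max_le ?_ ?_)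
        · rw [norm_pow]; exact pow_le_one₀ (norm_nonneg _) hy
        · rw [norm_mul]; exact mul_le_one₀ hy (norm_nonneg _) hx
      · rw [norm_pow]; exact pow_le_one₀ (norm_nonneg _) hx
    have hle : ‖x - y‖ ≤ ‖ε‖ * ‖x - y‖ := by
      calc ‖x - y‖ = ‖ε‖ * (‖y - x‖ * ‖y ^ 2 + y * x + x ^ 2‖) := by
            rw [hd, norm_mul, norm_mul]
        _ ≤ ‖ε‖ * (‖y - x‖ * 1) := by gcongr
        _ = ‖ε‖ * ‖x - y‖ := by rw [mul_one, norm_sub_rev]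
    have hpos : 0 < ‖x - y‖ := norm_pos_iff.mpr (sub_ne_zero.mpr hne)
    nlinarith
  -- existence via the Banach fixed point theorem in ℤ_p
  have huZ : ‖u‖ ≤ 1 := hun.le
  set U : ℤ_[p] := ⟨u, huZ⟩ with hUdef
  set E : ℤ_[p] := ⟨ε, hεn.le⟩ with hEdef
  set T : ℤ_[p] → ℤ_[p] := fun x => U - E * x ^ 3 with hTdef
  set K : NNReal := ⟨‖ε‖, norm_nonneg _⟩ with hKdef
  have hcontr : ContractingWith K T := by
    constructor
    · exact_mod_cast hεn
    · refine LipschitzWith.of_dist_le_mul fun x y => ?_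
      have hd : T x - T y = E * ((y - x) * (y ^ 2 + y * x + x ^ 2)) := by
        simp only [hTdef]; ring
      rw [dist_eq_norm, dist_eq_norm, hd]
      have h1 : ‖(y : ℤ_[p]) ^ 2 + y * x + x ^ 2‖ ≤ 1 := PadicInt.norm_le_one _
      calc ‖E * ((y - x) * (y ^ 2 + y * x + x ^ 2))‖
          = ‖E‖ * (‖y - x‖ * ‖(y : ℤ_[p]) ^ 2 + y * x + x ^ 2‖) := by
            rw [norm_mul, norm_mul]
        _ ≤ ‖E‖ * (‖y - x‖ * 1) := by gcongr
        _ = (K : ℝ) * ‖x - y‖ := by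
            rw [mul_one, norm_sub_rev]
            congr 1
  obtain ⟨c, hc⟩ : ∃ c : ℤ_[p], T c = c := ⟨hcontr.fixedPoint T, hcontr.fixedPoint_isFixedPt⟩
  -- the fixed point in ℚ_p
  have hcfix : (c : ℚ_[p]) = u - ε * (c : ℚ_[p]) ^ 3 := by
    have := congrArg (fun z : ℤ_[p] => (z : ℚ_[p])) hc
    exact this.symm
  have hc1 : ‖(c : ℚ_[p])‖ ≤ 1 := PadicInt.norm_le_one c
  -- the fixed point is a unit
  have hcnorm : ‖(c : ℚ_[p])‖ = 1 := by
    have hsmall : ‖-(ε * (c : ℚ_[p]) ^ 3)‖ < 1 := by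
      rw [norm_neg, norm_mul, norm_pow]
      calc ‖ε‖ * ‖(c : ℚ_[p])‖ ^ 3 ≤ ‖ε‖ * 1 := by
            gcongr
            exact pow_le_one₀ (norm_nonneg _) hc1
        _ < 1 := by rwa [mul_one]
    have hne : ‖u‖ ≠ ‖-(ε * (c : ℚ_[p]) ^ 3)‖ := by rw [hun]; exact (ne_of_lt hsmall).symm
    have : (c : ℚ_[p]) = u + -(ε * (c : ℚ_[p]) ^ 3) := by linear_combination hcfix
    rw [this, Padic.add_eq_max_of_ne hne, hun]
    exact max_eq_left hsmall.le
  have hset : {x : ℚ_[p] | ‖x‖ = 1 ∧ x ^ 3 + a * x = b} = {(c : ℚ_[p])} := by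
    ext x
    simp only [Set.mem_setOf_eq, Set.mem_singleton_iff]
    constructor
    · rintro ⟨hx1, hx2⟩
      exact huniq x c hx1.le hc1 ((hiff x).mp hx2) hcfix
    · rintro rfl
      exact ⟨hcnorm, (hiff _).mpr hcfix⟩
  rw [hset, Set.ncard_singleton]
end

section
/- Let p > 3 be a prime and let a, b ∈ ℚ_p be nonzero with |a|_p³ > |b|_p², the p-adic valuation v_p(a) even, and (−a_0)^{(p−1)/2} ≡ 1 (mod p), where a_0 is the first digit of a. Then the equation x³ + ax = b has exactly 3 solutions x in ℚ_p, i.e. the set {x ∈ ℚ_p : x³ + ax = b} has exactly 3 elements. -/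
open Polynomial

section Helpers

variable {p : ℕ} [Fact p.Prime]

private lemma norm_two_eq_one' (hp : 3 < p) : ‖(2 : ℤ_[p])‖ = 1 := by
  have h2 : ((2 : ℤ) : ℤ_[p]) = (2 : ℤ_[p]) := by push_cast; ring
  refine le_antisymm (PadicInt.norm_le_one _) (not_lt.1 ?_)
  rw [← h2, PadicInt.norm_int_lt_one_iff_dvd]
  intro hdvd
  have := Int.le_of_dvd (by norm_num) hdvd
  omega

private lemma hensel_simple {F : Polynomial ℤ_[p]} {a : ℤ_[p]}
    (h1 : ‖F.eval a‖ < 1) (h2 : ‖F.derivative.eval a‖ = 1) :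
    ∃ z : ℤ_[p], F.eval z = 0 ∧ ‖z - a‖ < 1 := by
  obtain ⟨z, hz, hza, -, -⟩ := hensels_lemma (F := F) (a := a)
    (by simp only [coe_aeval_eq_eval]; rw [h2]; simpa using h1)
  simp only [coe_aeval_eq_eval] at hz hza
  exact ⟨z, hz, h2 ▸ hza⟩

private lemma exists_sqrt (hp : 3 < p) (U : ℤ_[p]) (r0 : ℤ) (hr0 : ¬ (p:ℤ) ∣ r0)
    (h : ‖U - ((r0^2 : ℤ) : ℤ_[p])‖ < 1) : ∃ s : ℤ_[p], s^2 = U := by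
  have h1 : ‖((X:Polynomial ℤ_[p])^2 - C U).eval (r0 : ℤ_[p])‖ < 1 := by
    have : ((X:Polynomial ℤ_[p])^2 - C U).eval (r0 : ℤ_[p])
        = -(U - ((r0^2 : ℤ) : ℤ_[p])) := by push_cast; simp
    rw [this, norm_neg]; exact h
  have h2 : ‖((X:Polynomial ℤ_[p])^2 - C U).derivative.eval (r0 : ℤ_[p])‖ = 1 := by
    have : ((X:Polynomial ℤ_[p])^2 - C U).derivative.eval (r0 : ℤ_[p])
        = ((2 * r0 : ℤ) : ℤ_[p]) := by simp [derivative_sq]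
    rw [this]
    refine le_antisymm (PadicInt.norm_le_one _) (not_lt.1 ?_)
    rw [PadicInt.norm_int_lt_one_iff_dvd]
    intro hdvd
    rcases (Int.Prime.dvd_mul' Fact.out hdvd) with hd | hd
    · have := Int.le_of_dvd (by norm_num) hd; omega
    · exact hr0 hd
  obtain ⟨z, hz, -⟩ := hensel_simple h1 h2
  have : z^2 - U = 0 := by simpa using hz
  exact ⟨z, sub_eq_zero.1 this⟩

private lemma cubic_root_near (T : ℤ_[p]) (a : ℤ_[p])
    (h1 : ‖a ^ 3 - a - T‖ < 1) (h2 : ‖3 * a ^ 2 - 1‖ = 1) :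
    ∃ z : ℤ_[p], z ^ 3 - z = T ∧ ‖z - a‖ < 1 := by
  have e1 : ‖((X:Polynomial ℤ_[p])^3 - X - C T).eval a‖ < 1 := by
    have : ((X:Polynomial ℤ_[p])^3 - X - C T).eval a = a^3 - a - T := by simp
    rw [this]; exact h1
  have e2 : ‖((X:Polynomial ℤ_[p])^3 - X - C T).derivative.eval a‖ = 1 := by
    have : ((X:Polynomial ℤ_[p])^3 - X - C T).derivative.eval a = 3*a^2 - 1 := by
      simp [derivative_X_pow]; norm_num
    rw [this]; exact h2
  obtain ⟨z, hz, hza⟩ := hensel_simple e1 e2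
  have hz' : z^3 - z - T = 0 := by simpa using hz
  exact ⟨z, sub_eq_zero.1 (by linear_combination hz'), hza⟩

private lemma exists_c (hp : 3 < p) (a : ℚ_[p]) (ha : a ≠ 0) (hval : (2:ℤ) ∣ a.valuation)
    (a0 : ℤ) (h1 : 1 ≤ a0) (h2 : a0 ≤ (p:ℤ) - 1)
    (h3 : ‖a * (p : ℚ_[p]) ^ (-a.valuation) - (a0 : ℚ_[p])‖ < 1)
    (hres : Int.ModEq (p:ℤ) ((-a0) ^ ((p-1)/2)) 1) :
    ∃ c : ℚ_[p], c ^ 2 = -a := by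
  obtain ⟨m, hm⟩ := hval
  have hppos : (0:ℝ) < (p:ℝ) := by positivity
  have hpne : (p : ℚ_[p]) ≠ 0 := by
    exact_mod_cast (Nat.cast_ne_zero (R := ℚ_[p])).2 (by omega)
  set u : ℚ_[p] := a * (p : ℚ_[p]) ^ (-a.valuation) with hu
  have hunorm : ‖u‖ = 1 := by
    rw [hu, norm_mul, Padic.norm_eq_zpow_neg_valuation ha, Padic.norm_p_zpow, neg_neg,
      ← zpow_add₀ (ne_of_gt hppos)]
    simp
  have hpodd : p % 2 = 1 := Nat.odd_iff.1 ((Fact.out : p.Prime).odd_of_ne_two (by omega))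
  have ha0nd : ¬ ((p:ℤ) ∣ a0) := fun hd => by have := Int.le_of_dvd (by omega) hd; omega
  have ha0z : ((-a0 : ℤ) : ZMod p) ≠ 0 := by
    rw [Ne, ZMod.intCast_zmod_eq_zero_iff_dvd]
    intro hd; exact ha0nd ((dvd_neg).1 hd)
  have hsq : IsSquare ((-a0 : ℤ) : ZMod p) := by
    rw [ZMod.euler_criterion p ha0z]
    have : (((-a0) ^ ((p-1)/2) : ℤ) : ZMod p) = ((1:ℤ) : ZMod p) :=
      (ZMod.intCast_eq_intCast_iff _ _ _).2 hres
    push_cast at this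
    rw [show p / 2 = (p-1)/2 by omega]
    push_cast
    exact this
  obtain ⟨y, hy⟩ := hsq
  set r0 : ℤ := (y.val : ℤ) with hr0def
  have hyr : ((r0 : ℤ) : ZMod p) = y := by
    rw [hr0def]; push_cast [ZMod.natCast_val, ZMod.cast_id]; rfl
  have hdvd : (p:ℤ) ∣ r0^2 + a0 := by
    rw [← ZMod.intCast_zmod_eq_zero_iff_dvd]
    push_cast [hyr]
    rw [show (y:ZMod p)^2 = y * y by ring, ← hy]
    push_cast
    ring
  have hr0nd : ¬ ((p:ℤ) ∣ r0) := by
    intro hd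
    have : ((r0 : ℤ) : ZMod p) = 0 := (ZMod.intCast_zmod_eq_zero_iff_dvd _ _).2 hd
    rw [hyr] at this
    rw [this, mul_zero] at hy
    exact ha0z hy
  set U : ℤ_[p] := ⟨-u, by rw [norm_neg, hunorm]⟩ with hUdef
  have hUnorm : ‖U - ((r0^2 : ℤ) : ℤ_[p])‖ < 1 := by
    have hcoe : ((U - ((r0^2 : ℤ) : ℤ_[p]) : ℤ_[p]) : ℚ_[p])
        = -(u - (a0:ℚ_[p])) - (((r0^2 + a0 : ℤ) : ℚ_[p])) := by
      rw [PadicInt.coe_sub]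
      push_cast [hUdef]
      ring
    rw [PadicInt.norm_def, hcoe]
    have hb2 : ‖(((r0^2 + a0 : ℤ) : ℚ_[p]))‖ < 1 :=
      Padic.norm_intCast_lt_one_iff.2 hdvd
    calc ‖-(u - (a0:ℚ_[p])) - (((r0^2 + a0 : ℤ) : ℚ_[p]))‖
        ≤ max ‖-(u - (a0:ℚ_[p]))‖ ‖-(((r0^2 + a0 : ℤ) : ℚ_[p]))‖ := by
          rw [sub_eq_add_neg]; exact Padic.nonarchimedean _ _
      _ < 1 := by simp only [norm_neg]; exact max_lt h3 hb2
  obtain ⟨s, hs⟩ := exists_sqrt hp U r0 hr0nd hUnorm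
  refine ⟨(p:ℚ_[p])^m * (s:ℚ_[p]), ?_⟩
  have hsq' : ((s:ℚ_[p]))^2 = -u := by
    have := congrArg (fun w : ℤ_[p] => (w : ℚ_[p])) hs
    push_cast at this
    simpa [hUdef] using this
  have e1 : ((p:ℚ_[p])^m)^2 = (p:ℚ_[p])^(a.valuation) := by
    rw [← zpow_natCast ((p:ℚ_[p])^m), ← zpow_mul, hm]
    norm_num
    ring_nf
  calc ((p:ℚ_[p])^m * (s:ℚ_[p]))^2 = ((p:ℚ_[p])^m)^2 * ((s:ℚ_[p]))^2 := by ring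
    _ = (p:ℚ_[p])^(a.valuation) * (-u) := by rw [e1, hsq']
    _ = -( (p:ℚ_[p])^(a.valuation) * ((p:ℚ_[p])^(-a.valuation) * a)) := by rw [hu]; ring
    _ = -a := by rw [← mul_assoc, ← zpow_add₀ hpne]; simp

end Helpers

theorem cubic_three_solutions_of_gt (p : ℕ) [Fact p.Prime] (hp : 3 < p)
    (a b : ℚ_[p]) (ha : a ≠ 0) (hb : b ≠ 0)
    (hab : ‖b‖ ^ 2 < ‖a‖ ^ 3)
    (hval : (2 : ℤ) ∣ a.valuation)
    (a0 : ℤ) (ha0 : isFirstDigit p a a0)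
    (hres : Int.ModEq (p : ℤ) ((-a0) ^ ((p - 1) / 2)) 1) :
    {x : ℚ_[p] | x ^ 3 + a * x = b}.ncard = 3 := by
  classical
  obtain ⟨h1, h2, h3⟩ := ha0
  obtain ⟨c, hc2⟩ := exists_c hp a ha hval a0 h1 h2 h3 hres
  have hcne : c ≠ 0 := by
    intro h
    apply ha
    have h0 : -a = 0 := by rw [← hc2, h]; ring
    simpa using h0
  have hcpos : (0:ℝ) < ‖c‖ := norm_pos_iff.2 hcne
  have hcn2 : ‖c‖ ^ 2 = ‖a‖ := by rw [← norm_pow, hc2, norm_neg]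
  have hbc : ‖b‖ < ‖c‖ ^ 3 := by
    refine lt_of_pow_lt_pow_left₀ 2 (by positivity) ?_
    calc ‖b‖^2 < ‖a‖^3 := hab
      _ = (‖c‖^2)^3 := by rw [hcn2]
      _ = (‖c‖^3)^2 := by ring
  set t : ℚ_[p] := b / c^3 with ht
  have htn : ‖t‖ < 1 := by
    rw [ht, norm_div, norm_pow]
    exact (div_lt_one (by positivity)).2 hbc
  set T : ℤ_[p] := ⟨t, le_of_lt htn⟩ with hTdef
  have hTn : ‖T‖ < 1 := by rw [PadicInt.norm_def]; exact htn
  obtain ⟨z0, hz0, hz0n⟩ := cubic_root_near T 0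
    (by rw [show ((0:ℤ_[p])^3 - 0 - T) = -T by ring, norm_neg]; exact hTn)
    (by rw [show (3*(0:ℤ_[p])^2 - 1) = -1 by ring, norm_neg, norm_one])
  obtain ⟨z1, hz1, hz1n⟩ := cubic_root_near T 1
    (by rw [show ((1:ℤ_[p])^3 - 1 - T) = -T by ring, norm_neg]; exact hTn)
    (by rw [show (3*(1:ℤ_[p])^2 - 1) = 2 by ring]; exact norm_two_eq_one' hp)
  obtain ⟨z2, hz2, hz2n⟩ := cubic_root_near T (-1)
    (by rw [show ((-1:ℤ_[p])^3 - (-1) - T) = -T by ring, norm_neg]; exact hTn)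
    (by rw [show (3*(-1:ℤ_[p])^2 - 1) = 2 by ring]; exact norm_two_eq_one' hp)
  -- distinctness of the z's
  have hne01 : z0 ≠ z1 := by
    intro h
    have he : (1:ℤ_[p]) = (z0 - 0) + -(z1 - 1) := by rw [h]; ring
    have hlt : ‖(1:ℤ_[p])‖ < 1 := by
      rw [he]
      calc ‖(z0 - 0) + -(z1 - 1)‖ ≤ max ‖z0 - 0‖ ‖-(z1 - 1)‖ := PadicInt.nonarchimedean _ _
        _ < 1 := by rw [norm_neg]; exact max_lt hz0n hz1n
    simp at hlt
  have hne02 : z0 ≠ z2 := by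
    intro h
    have he : (1:ℤ_[p]) = (z2 - (-1)) + -(z0 - 0) := by rw [h]; ring
    have hlt : ‖(1:ℤ_[p])‖ < 1 := by
      rw [he]
      calc ‖(z2 - (-1)) + -(z0 - 0)‖ ≤ max ‖z2 - (-1)‖ ‖-(z0 - 0)‖ :=
            PadicInt.nonarchimedean _ _
        _ < 1 := by rw [norm_neg]; exact max_lt hz2n hz0n
    simp at hlt
  have hne12 : z1 ≠ z2 := by
    intro h
    have he : (2:ℤ_[p]) = (z2 - (-1)) + -(z1 - 1) := by rw [h]; ring
    have hlt : ‖(2:ℤ_[p])‖ < 1 := by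
      rw [he]
      calc ‖(z2 - (-1)) + -(z1 - 1)‖ ≤ max ‖z2 - (-1)‖ ‖-(z1 - 1)‖ :=
            PadicInt.nonarchimedean _ _
        _ < 1 := by rw [norm_neg]; exact max_lt hz2n hz1n
    rw [norm_two_eq_one' hp] at hlt
    exact lt_irrefl _ hlt
  -- the roots in ℚ_p
  have hroot : ∀ z : ℤ_[p], z^3 - z = T → (c * z)^3 + a * (c * z) = b := by
    intro z hz
    have hzq : ((z:ℚ_[p]))^3 - (z:ℚ_[p]) = t := by
      have hc := congrArg (fun w : ℤ_[p] => (w : ℚ_[p])) hz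
      push_cast at hc
      simpa [hTdef] using hc
    have hca : a = -c^2 := by linear_combination hc2
    have hc3 : c^3 ≠ 0 := pow_ne_zero _ hcne
    calc (c * z)^3 + a * (c * z) = c^3 * (((z:ℚ_[p]))^3 - (z:ℚ_[p])) := by rw [hca]; ring
      _ = c^3 * t := by rw [hzq]
      _ = b := by rw [ht]; field_simp
  have hinj : ∀ z w : ℤ_[p], c * (z:ℚ_[p]) = c * (w:ℚ_[p]) → z = w := by
    intro z w h
    exact Subtype.ext (mul_left_cancel₀ hcne h)
  have hx01 : c * (z0:ℚ_[p]) ≠ c * (z1:ℚ_[p]) := fun h => hne01 (hinj _ _ h)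
  have hx02 : c * (z0:ℚ_[p]) ≠ c * (z2:ℚ_[p]) := fun h => hne02 (hinj _ _ h)
  have hx12 : c * (z1:ℚ_[p]) ≠ c * (z2:ℚ_[p]) := fun h => hne12 (hinj _ _ h)
  set S := {x : ℚ_[p] | x ^ 3 + a * x = b} with hS
  -- upper bound via the polynomial X^3 + aX - b
  set P : Polynomial ℚ_[p] := X^3 + C a * X - C b with hP
  have hPd : P.natDegree = 3 := by rw [hP]; compute_degree!
  have hP0 : P ≠ 0 := fun h => by simp [h] at hPd
  have hsub : S ⊆ ↑P.roots.toFinset := by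
    intro x hx
    simp only [Finset.mem_coe, Multiset.mem_toFinset]
    rw [Polynomial.mem_roots hP0]
    have : P.eval x = 0 := by
      rw [hP]
      simp only [eval_sub, eval_add, eval_pow, eval_mul, eval_C, eval_X]
      rw [sub_eq_zero]
      exact hx
    exact this
  have hfin : S.Finite := Set.Finite.subset (P.roots.toFinset.finite_toSet) hsub
  have hle : S.ncard ≤ 3 := by
    have hcard := Set.ncard_le_ncard hsub (P.roots.toFinset.finite_toSet)
    rw [Set.ncard_coe_finset] at hcard
    refine le_trans hcard (le_trans (Multiset.toFinset_card_le _) ?_)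
    rw [← hPd]
    exact P.card_roots'
  have hge : 3 ≤ S.ncard := by
    have h3 : ({c * (z0:ℚ_[p]), c * (z1:ℚ_[p]), c * (z2:ℚ_[p])} : Set ℚ_[p]).ncard = 3 :=
      Set.ncard_eq_three.2 ⟨_, _, _, hx01, hx02, hx12, rfl⟩
    rw [← h3]
    refine Set.ncard_le_ncard ?_ hfin
    intro x hx
    rcases hx with rfl | rfl | rfl
    · exact hroot z0 hz0
    · exact hroot z1 hz1
    · exact hroot z2 hz2
  omega
end

section
/- Let p > 3 be a prime and let a, b ∈ ℚ_p be nonzero with |a|_p³ > |b|_p², the p-adic valuation v_p(a) even, and (3a_0)^{(p−1)/2} ≡ 1 (mod p), where a_0 is the first digit of a. Then the Cardano formula is applicable in ℚ_p: there exist y, u, v ∈ ℚ_p such that y² = (a/3)³ + (b/2)², u³ = b/2 + y, v³ = b/2 − y, u·v = −a/3, and x = u + v satisfies x³ + ax = b. -/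
open Polynomial in
lemma pow_root_exists (p : ℕ) [Fact p.Prime] (n : ℕ)
    (hn : ‖(n : ℤ_[p])‖ = 1)
    (E t : ℤ_[p]) (ht : ‖t‖ = 1) (hEt : ‖E - t ^ n‖ < 1) :
    ∃ z : ℤ_[p], z ^ n = E ∧ ‖z - t‖ < 1 := by
  set F : Polynomial ℤ_[p] := X ^ n - C E with hF
  have hderiv : F.derivative.eval t = n * t ^ (n - 1) := by
    simp [hF, derivative_X_pow]
  have hdnorm : ‖F.derivative.eval t‖ = 1 := by
    rw [hderiv, norm_mul, norm_pow, hn, ht, one_pow, one_mul]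
  have heval : ‖F.eval t‖ < 1 := by
    simp only [hF, Polynomial.eval_sub, Polynomial.eval_pow, Polynomial.eval_X, Polynomial.eval_C]
    rwa [← norm_neg, neg_sub]
  have key : ‖F.eval t‖ < ‖F.derivative.eval t‖ ^ 2 := by
    rw [hdnorm]; simpa using heval
  obtain ⟨z, hz, hzd, -, -⟩ := hensels_lemma key
  refine ⟨z, ?_, by rwa [Polynomial.coe_aeval_eq_eval, hdnorm] at hzd⟩
  simpa only [Polynomial.coe_aeval_eq_eval, hF, Polynomial.eval_sub, Polynomial.eval_pow, Polynomial.eval_X, Polynomial.eval_C,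
    sub_eq_zero] using hz

theorem cardano_applicable_of_gt (p : ℕ) [Fact p.Prime] (hp : 3 < p)
    (a b : ℚ_[p]) (ha : a ≠ 0) (hb : b ≠ 0)
    (hab : ‖b‖ ^ 2 < ‖a‖ ^ 3)
    (hval : (2 : ℤ) ∣ a.valuation)
    (a0 : ℤ) (ha0 : isFirstDigit p a a0)
    (hres : Int.ModEq (p : ℤ) ((3 * a0) ^ ((p - 1) / 2)) 1) :
    ∃ y u v : ℚ_[p],
      y ^ 2 = (a / 3) ^ 3 + (b / 2) ^ 2 ∧
      u ^ 3 = b / 2 + y ∧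
      v ^ 3 = b / 2 - y ∧
      u * v = -(a / 3) ∧
      (u + v) ^ 3 + a * (u + v) = b := by
  have hpp : p.Prime := Fact.out
  obtain ⟨k, hk⟩ := hval
  obtain ⟨-, -, hα0⟩ := ha0
  set m := a.valuation with hm
  -- basic facts
  have hpR1 : (1:ℝ) < (p:ℝ) := by exact_mod_cast hpp.one_lt
  have hpR0 : (0:ℝ) < (p:ℝ) := by linarith
  have hpQ0 : (p:ℚ_[p]) ≠ 0 := by
    exact_mod_cast (Nat.cast_ne_zero (R := ℚ_[p])).2 hpp.ne_zero
  have hunit : ∀ z : ℤ, ¬ (p:ℤ) ∣ z → ‖(z:ℚ_[p])‖ = 1 := fun z hz =>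
    le_antisymm (Padic.norm_int_le_one z)
      (not_lt.1 fun h => hz ((Padic.norm_intCast_lt_one_iff (k := z)).1 h))
  have hunitZ : ∀ z : ℤ, ¬ (p:ℤ) ∣ z → ‖(z:ℤ_[p])‖ = 1 := fun z hz =>
    le_antisymm (PadicInt.norm_le_one _)
      (not_lt.1 fun h => hz ((PadicInt.norm_int_lt_one_iff_dvd z).1 h))
  have hnd2 : ¬ (p:ℤ) ∣ 2 := by
    intro h; have := Int.le_of_dvd (by norm_num) h; omega
  have hnd3 : ¬ (p:ℤ) ∣ 3 := by
    intro h; have := Int.le_of_dvd (by norm_num) h; omega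
  have hnd27 : ¬ (p:ℤ) ∣ 27 := by
    intro h
    have h' : (p:ℤ) ∣ 3^3 := by norm_num at h ⊢; exact h
    exact hnd3 (Int.Prime.dvd_pow' (by exact_mod_cast hpp) h')
  have h2 : ‖(2:ℚ_[p])‖ = 1 := by have := hunit 2 hnd2; push_cast at this; exact this
  have h3 : ‖(3:ℚ_[p])‖ = 1 := by have := hunit 3 hnd3; push_cast at this; exact this
  -- residue field computations
  have h3Z : (3 : ZMod p) ≠ 0 := by
    have : ((3:ℤ) : ZMod p) ≠ 0 := by
      rw [Ne, ZMod.intCast_zmod_eq_zero_iff_dvd]; exact hnd3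
    exact_mod_cast this
  have hres' : ((3 * a0 : ℤ) : ZMod p) ^ ((p - 1) / 2) = 1 := by
    have := (ZMod.intCast_eq_intCast_iff _ _ _).2 hres
    push_cast at this ⊢
    exact_mod_cast this
  have h3a0 : ((3 * a0 : ℤ) : ZMod p) ≠ 0 := by
    intro h0
    rw [h0, zero_pow (by omega : (p-1)/2 ≠ 0)] at hres'
    exact zero_ne_one hres'
  have ha0Z : ((a0 : ℤ) : ZMod p) ≠ 0 := by
    intro h0; apply h3a0; push_cast [h0]; ring
  -- Euler criterion
  have hsq : IsSquare (((3 * a0 : ℤ) : ZMod p)) := by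
    rw [ZMod.euler_criterion p h3a0]
    have hodd : p % 2 = 1 := (hpp.eq_two_or_odd).resolve_left (by omega)
    have : (p - 1) / 2 = p / 2 := by omega
    rwa [← this]
  obtain ⟨c, hc⟩ := hsq
  have hcne : (c : ZMod p) ≠ 0 := by
    intro h0; rw [h0, mul_zero] at hc; exact h3a0 hc
  have h27Z : (27 : ZMod p) ≠ 0 := by
    have : ((27:ℤ) : ZMod p) ≠ 0 := by
      rw [Ne, ZMod.intCast_zmod_eq_zero_iff_dvd]; exact hnd27
    exact_mod_cast this
  set i : ZMod p := (27 : ZMod p)⁻¹ with hi_def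
  have hi : (27 : ZMod p) * i = 1 := mul_inv_cancel₀ h27Z
  set tb : ZMod p := c^3 * i with htb_def
  have ht2 : (27 : ZMod p) * tb^2 = ((a0 : ℤ) : ZMod p)^3 := by
    have hcc : (c : ZMod p) * c = ((3 * a0 : ℤ) : ZMod p) := hc.symm
    push_cast at hcc
    linear_combination (27*i^2*((c*c)^2 + (c*c)*(3*(a0:ZMod p)) + (3*(a0:ZMod p))^2)) * hcc +
      (((a0:ZMod p))^3*(27*i + 1)) * hi
  have htbne : tb ≠ 0 := by
    intro h0
    rcases mul_eq_zero.1 (htb_def ▸ h0) with h | h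
    · exact hcne (pow_eq_zero_iff (by norm_num) |>.1 h)
    · rw [h, mul_zero] at hi; exact zero_ne_one hi
  set j : ZMod p := (3 : ZMod p)⁻¹ with hj_def
  have hj : (3 : ZMod p) * j = 1 := mul_inv_cancel₀ h3Z
  set q : ZMod p := ((a0 : ℤ) : ZMod p) * j with hq_def
  have hqne : q ≠ 0 := by
    intro h0
    rcases mul_eq_zero.1 (hq_def ▸ h0) with h | h
    · exact ha0Z h
    · rw [h, mul_zero] at hj; exact zero_ne_one hj
  have hij : i = j^3 := by
    have h1 : (27:ZMod p) * j^3 = 1 := by linear_combination ((3*j)^2 + 3*j + 1) * hj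
    exact mul_left_cancel₀ h27Z (hi.trans h1.symm)
  have h2' : tb^2 = ((a0:ℤ) : ZMod p)^3 * i := by
    linear_combination i * ht2 - tb^2 * hi
  have hq3 : q^3 = tb^2 := by
    linear_combination -h2' - ((a0:ℤ) : ZMod p)^3 * hij
  set wb : ZMod p := tb * q⁻¹ with hwb_def
  have hw3 : wb^3 = tb := by
    have hqq : q * q⁻¹ = 1 := mul_inv_cancel₀ hqne
    rw [hwb_def]
    linear_combination (-(tb*(q⁻¹)^3)) * hq3 + tb*((q*q⁻¹)^2 + q*q⁻¹ + 1) * hqq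
  have hwbne : wb ≠ 0 := by
    intro h0
    rcases mul_eq_zero.1 (hwb_def ▸ h0) with h | h
    · exact htbne h
    · exact hqne (inv_eq_zero.1 h)
  -- lift the residues to integers
  haveI : NeZero p := ⟨hpp.ne_zero⟩
  set t : ℤ := (tb.val : ℤ) with ht_def
  set w : ℤ := (wb.val : ℤ) with hw_def
  have htcast : ((t : ℤ) : ZMod p) = tb := by
    rw [ht_def]; push_cast; exact ZMod.natCast_zmod_val tb
  have hwcast : ((w : ℤ) : ZMod p) = wb := by
    rw [hw_def]; push_cast; exact ZMod.natCast_zmod_val wb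
  have hdvdA : (p:ℤ) ∣ (a0^3 - 27 * t^2) := by
    rw [← ZMod.intCast_zmod_eq_zero_iff_dvd]
    push_cast [htcast]
    linear_combination -ht2
  have hdvdB : (p:ℤ) ∣ (t - w^3) := by
    rw [← ZMod.intCast_zmod_eq_zero_iff_dvd]
    push_cast [htcast, hwcast]
    linear_combination -hw3
  have hndT : ¬ (p:ℤ) ∣ t := by
    rw [← ZMod.intCast_zmod_eq_zero_iff_dvd, htcast]; exact htbne
  have hndW : ¬ (p:ℤ) ∣ w := by
    rw [← ZMod.intCast_zmod_eq_zero_iff_dvd, hwcast]; exact hwbne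
  -- norms
  have hna : ‖a‖ = (p:ℝ) ^ (-m) := Padic.norm_eq_zpow_neg_valuation ha
  set α := a * (p:ℚ_[p]) ^ (-m) with hα_def
  have hα1 : ‖α‖ = 1 := by
    rw [hα_def, norm_mul, Padic.norm_p_zpow, hna, ← zpow_add₀ (ne_of_gt hpR0)]
    simp
  set D := (a/3)^3 + (b/2)^2 with hD_def
  have haC : ‖a‖^3 = (p:ℝ)^(-(3*m)) := by
    rw [hna, ← zpow_natCast ((p:ℝ) ^ (-m)) 3, ← zpow_mul]
    congr 1; push_cast; ring
  have hA3 : ‖(a/3)^3‖ = (p:ℝ)^(-(3*m)) := by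
    rw [norm_pow, norm_div, h3, div_one]; exact haC
  have hB2 : ‖(b/2)^2‖ = ‖b‖^2 := by rw [norm_pow, norm_div, h2, div_one]
  have hab' : ‖b‖^2 < (p:ℝ)^(-(3*m)) := haC ▸ hab
  have hBlt : ‖(b/2)^2‖ < ‖(a/3)^3‖ := by rw [hB2, hA3]; exact hab'
  have hDnorm : ‖D‖ = (p:ℝ)^(-(3*m)) := by
    rw [hD_def, Padic.add_eq_max_of_ne (ne_of_lt hBlt).symm, max_eq_left hBlt.le, hA3]
  set E := D * (p:ℚ_[p])^(-(3*m)) with hE_def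
  have hE1 : ‖E‖ = 1 := by
    rw [hE_def, norm_mul, hDnorm, Padic.norm_p_zpow, neg_neg,
      ← zpow_add₀ (ne_of_gt hpR0)]
    simp
  have hαa : α^3 = a^3 * (p:ℚ_[p])^(-(3*m)) := by
    rw [hα_def, mul_pow, ← zpow_natCast ((p:ℚ_[p])^(-m)) 3, ← zpow_mul]
    congr 2; push_cast; ring
  have hα3 : (α/3)^3 = (a/3)^3 * (p:ℚ_[p])^(-(3*m)) := by
    rw [div_pow, div_pow, hαa]; ring
  have hEA : E - (α/3)^3 = (b/2)^2 * (p:ℚ_[p])^(-(3*m)) := by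
    rw [hE_def, hα3, hD_def]; ring
  have hEαlt : ‖E - (α/3)^3‖ < 1 := by
    rw [hEA, norm_mul, hB2, Padic.norm_p_zpow, neg_neg]
    calc ‖b‖^2 * (p:ℝ)^(3*m) < (p:ℝ)^(-(3*m)) * (p:ℝ)^(3*m) :=
          mul_lt_mul_of_pos_right hab' (zpow_pos hpR0 _)
      _ = 1 := by rw [← zpow_add₀ (ne_of_gt hpR0)]; simp
  have h27Q : ‖(27:ℚ_[p])‖ = 1 := by
    have := hunit 27 hnd27; push_cast at this; exact this
  have ha0le : ‖((a0:ℤ):ℚ_[p])‖ ≤ 1 := Padic.norm_int_le_one a0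
  -- congruence E ≡ t² mod p
  have key1 : ‖E - (t:ℚ_[p])^2‖ < 1 := by
    have hid : (27:ℚ_[p]) * (E - (t:ℚ_[p])^2)
        = 27*(E - (α/3)^3) + (α^3 - ((a0:ℤ):ℚ_[p])^3) + (((a0^3 - 27*t^2 : ℤ)):ℚ_[p]) := by
      push_cast; ring
    have n1 : ‖(27:ℚ_[p])*(E-(α/3)^3)‖ < 1 := by
      rw [norm_mul, h27Q, one_mul]; exact hEαlt
    have n2 : ‖α^3 - ((a0:ℤ):ℚ_[p])^3‖ < 1 := by
      have factor : α^3 - ((a0:ℤ):ℚ_[p])^3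
          = (α - ((a0:ℤ):ℚ_[p])) * (α^2 + α*((a0:ℤ):ℚ_[p]) + ((a0:ℤ):ℚ_[p])^2) := by ring
      have hfac2 : ‖α^2 + α*((a0:ℤ):ℚ_[p]) + ((a0:ℤ):ℚ_[p])^2‖ ≤ 1 := by
        refine le_trans (Padic.nonarchimedean _ _) (max_le
          (le_trans (Padic.nonarchimedean _ _) (max_le ?_ ?_)) ?_)
        · rw [norm_pow, hα1]; norm_num
        · rw [norm_mul, hα1, one_mul]; exact ha0le
        · rw [norm_pow]; exact pow_le_one₀ (norm_nonneg _) ha0le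
      calc ‖α^3 - ((a0:ℤ):ℚ_[p])^3‖
          = ‖α - ((a0:ℤ):ℚ_[p])‖ * ‖α^2 + α*((a0:ℤ):ℚ_[p]) + ((a0:ℤ):ℚ_[p])^2‖ := by
            rw [factor, norm_mul]
        _ ≤ ‖α - ((a0:ℤ):ℚ_[p])‖ * 1 :=
            mul_le_mul_of_nonneg_left hfac2 (norm_nonneg _)
        _ < 1 := by rw [mul_one]; exact hα0
    have n3 : ‖(((a0^3 - 27*t^2 : ℤ)):ℚ_[p])‖ < 1 :=
      Padic.norm_intCast_lt_one_iff.2 hdvdA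
    have step : ‖(27:ℚ_[p]) * (E - (t:ℚ_[p])^2)‖ < 1 := by
      rw [hid]
      exact lt_of_le_of_lt
        (le_trans (Padic.nonarchimedean _ _)
          (max_le_max (Padic.nonarchimedean _ _) le_rfl))
        (max_lt (max_lt n1 n2) n3)
    rwa [norm_mul, h27Q, one_mul] at step
  -- square root via Hensel
  set E' : ℤ_[p] := ⟨E, hE1.le⟩ with hE'_def
  set t' : ℤ_[p] := ((t : ℤ) : ℤ_[p]) with ht'_def
  have key1' : ‖E' - t'^2‖ < 1 := by
    rw [PadicInt.norm_def, PadicInt.coe_sub, PadicInt.coe_pow, ht'_def, PadicInt.coe_intCast]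
    exact key1
  have ht'1 : ‖t'‖ = 1 := hunitZ t hndT
  have h2Z' : ‖((2:ℕ) : ℤ_[p])‖ = 1 := by
    have := hunitZ 2 hnd2; push_cast at this ⊢; exact this
  obtain ⟨s, hs2, hst⟩ := pow_root_exists p 2 h2Z' E' t' ht'1 key1'
  have hsE : ((s : ℚ_[p]))^2 = E := by
    rw [← PadicInt.coe_pow, hs2]
  have hs1 : ‖(s : ℚ_[p])‖ = 1 := by
    have h' : ‖(s : ℚ_[p])‖^2 = 1 := by rw [← norm_pow, hsE, hE1]
    have h'' : (‖(s : ℚ_[p])‖ - 1) * (‖(s : ℚ_[p])‖ + 1) = 0 := by linear_combination h'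
    have h0 : (0:ℝ) ≤ ‖(s : ℚ_[p])‖ := norm_nonneg _
    rcases mul_eq_zero.1 h'' with h | h
    · linarith
    · linarith
  -- define y
  set y : ℚ_[p] := (p:ℚ_[p])^(3*k) * (s : ℚ_[p]) with hy_def
  have hzp : (p:ℚ_[p])^(3*k) * (p:ℚ_[p])^(3*k) = (p:ℚ_[p])^(3*m) := by
    rw [← zpow_add₀ hpQ0]; congr 1; rw [hk]; ring
  have hppinv : (p:ℚ_[p])^(3*m) * (p:ℚ_[p])^(-(3*m)) = 1 := by
    rw [← zpow_add₀ hpQ0]; simp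
  have hy2 : y^2 = D := by
    have : y^2 = (p:ℚ_[p])^(3*m) * E := by
      rw [hy_def, hE_def]
      calc ((p:ℚ_[p])^(3*k) * (s : ℚ_[p]))^2
          = ((p:ℚ_[p])^(3*k) * (p:ℚ_[p])^(3*k)) * ((s:ℚ_[p]))^2 := by ring
        _ = (p:ℚ_[p])^(3*m) * E := by rw [hzp, hsE]
    rw [this, hE_def, ← mul_assoc, mul_comm ((p:ℚ_[p])^(3*m)) D, mul_assoc, hppinv, mul_one]
  -- b is small
  have hbsmall : ‖b‖ < (p:ℝ)^(-(3*k)) := by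
    have hsq : ‖b‖^2 < ((p:ℝ)^(-(3*k)))^2 := by
      rw [← zpow_natCast ((p:ℝ)^(-(3*k))) 2, ← zpow_mul]
      calc ‖b‖^2 < (p:ℝ)^(-(3*m)) := hab'
        _ = (p:ℝ)^(-(3*k)*2) := by congr 1; rw [hk]; ring
    exact lt_of_pow_lt_pow_left₀ 2 (zpow_pos hpR0 _).le hsq
  -- define G
  set G : ℚ_[p] := (b/2 + y) * (p:ℚ_[p])^(-(3*k)) with hG_def
  have hGsub : G - (s:ℚ_[p]) = (b/2) * (p:ℚ_[p])^(-(3*k)) := by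
    rw [hG_def, hy_def]
    have : (p:ℚ_[p])^(3*k) * (p:ℚ_[p])^(-(3*k)) = 1 := by
      rw [← zpow_add₀ hpQ0]; simp
    calc (b/2 + (p:ℚ_[p])^(3*k) * (s:ℚ_[p])) * (p:ℚ_[p])^(-(3*k)) - (s:ℚ_[p])
        = (b/2) * (p:ℚ_[p])^(-(3*k))
          + ((p:ℚ_[p])^(3*k) * (p:ℚ_[p])^(-(3*k)) - 1) * (s:ℚ_[p]) := by ring
      _ = (b/2) * (p:ℚ_[p])^(-(3*k)) := by rw [this]; ring
  have hGslt : ‖G - (s:ℚ_[p])‖ < 1 := by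
    rw [hGsub, norm_mul, norm_div, h2, div_one, Padic.norm_p_zpow, neg_neg]
    calc ‖b‖ * (p:ℝ)^(3*k) < (p:ℝ)^(-(3*k)) * (p:ℝ)^(3*k) :=
          mul_lt_mul_of_pos_right hbsmall (zpow_pos hpR0 _)
      _ = 1 := by rw [← zpow_add₀ (ne_of_gt hpR0)]; simp
  have hG1 : ‖G‖ = 1 := by
    have : G = (s:ℚ_[p]) + (G - (s:ℚ_[p])) := by ring
    rw [this, Padic.add_eq_max_of_ne (by rw [hs1]; exact (ne_of_lt hGslt).symm),
      hs1, max_eq_left (by rw [hs1] at *; exact hGslt.le)]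
  set G' : ℤ_[p] := ⟨G, hG1.le⟩ with hG'_def
  set w' : ℤ_[p] := ((w : ℤ) : ℤ_[p]) with hw'_def
  have hw'1 : ‖w'‖ = 1 := hunitZ w hndW
  have key2' : ‖G' - w'^3‖ < 1 := by
    have hGsZ : ‖G' - s‖ < 1 := by
      rw [PadicInt.norm_def, PadicInt.coe_sub]
      exact hGslt
    have htwZ : ‖t' - w'^3‖ < 1 := by
      have : t' - w'^3 = ((t - w^3 : ℤ) : ℤ_[p]) := by push_cast [ht'_def, hw'_def]; ring
      rw [this]
      exact (PadicInt.norm_int_lt_one_iff_dvd _).2 hdvdB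
    have hid2 : G' - w'^3 = (G' - s) + (s - t') + (t' - w'^3) := by ring
    rw [hid2]
    exact lt_of_le_of_lt
      (le_trans (PadicInt.nonarchimedean _ _)
        (max_le_max (PadicInt.nonarchimedean _ _) le_rfl))
      (max_lt (max_lt hGsZ hst) htwZ)
  have h3Z' : ‖((3:ℕ) : ℤ_[p])‖ = 1 := by
    have := hunitZ 3 hnd3; push_cast at this ⊢; exact this
  obtain ⟨U, hU3, -⟩ := pow_root_exists p 3 h3Z' G' w' hw'1 key2'
  have hUG : ((U : ℚ_[p]))^3 = G := by rw [← PadicInt.coe_pow, hU3]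
  -- define u and v
  set u : ℚ_[p] := (p:ℚ_[p])^(k:ℤ) * (U : ℚ_[p]) with hu_def
  have hu3 : u^3 = b/2 + y := by
    have hzp3 : ((p:ℚ_[p])^(k:ℤ))^3 = (p:ℚ_[p])^(3*k) := by
      rw [← zpow_natCast ((p:ℚ_[p])^(k:ℤ)) 3, ← zpow_mul]; congr 1; push_cast; ring
    have hinv3 : (p:ℚ_[p])^(3*k) * (p:ℚ_[p])^(-(3*k)) = 1 := by
      rw [← zpow_add₀ hpQ0]; simp
    calc u^3 = ((p:ℚ_[p])^(k:ℤ))^3 * ((U:ℚ_[p]))^3 := by rw [hu_def]; ring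
      _ = (p:ℚ_[p])^(3*k) * ((b/2 + y) * (p:ℚ_[p])^(-(3*k))) := by rw [hzp3, hUG, hG_def]
      _ = (b/2 + y) * ((p:ℚ_[p])^(3*k) * (p:ℚ_[p])^(-(3*k))) := by ring
      _ = b/2 + y := by rw [hinv3, mul_one]
  have hby0 : b/2 + y ≠ 0 := by
    intro h0
    rw [hG_def, h0, zero_mul] at hG1
    simp at hG1
  have hu0 : u ≠ 0 := by
    intro h0
    apply hby0
    rw [← hu3, h0]; ring
  set v : ℚ_[p] := -(a/3)/u with hv_def
  have huv : u * v = -(a/3) := by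
    rw [hv_def, mul_comm, div_mul_cancel₀ _ hu0]
  have hfac : (b/2 - y) * (b/2 + y) = (-(a/3))^3 := by
    have : y^2 = (a/3)^3 + (b/2)^2 := hy2
    linear_combination -this
  have hv3 : v^3 = b/2 - y := by
    have : v^3 * (b/2 + y) = (b/2 - y) * (b/2 + y) := by
      rw [hv_def, div_pow, hu3, div_mul_cancel₀ _ hby0, hfac]
    exact mul_right_cancel₀ hby0 this
  refine ⟨y, u, v, hy2, hu3, hv3, huv, ?_⟩
  linear_combination hu3 + hv3 + 3*(u+v)*huv
end
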